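/- Suppose the irreducibility conditions hold: α < 1, β > 0, β+γ < 1, δ > 0, δ+φ < 1, κ < 1. Then there exists a sequence of parameter tuples (αₙ, βₙ, γₙ, δₙ, φₙ, κₙ) converging to (α, β, γ, δ, φ, κ) such that for every n: (i) 0 ≤ αₙ, βₙ, γₙ, δₙ, φₙ, κₙ ≤ 1, βₙ+γₙ ≤ 1, δₙ+φₙ ≤ 1 and the irreducibility conditions αₙ < 1, βₙ > 0, βₙ+γₙ < 1, δₙ > 0, δₙ+φₙ < 1, κₙ < 1 hold (so A(αₙ,βₙ,γₙ,δₙ,φₙ,κₙ) is an irreducible tridiagonal stochastic matrix and A(αₙ,...) → A entrywise), and (ii) all four leading principal minors Δ₁, Δ₂, Δ₃, Δ₄ of the corresponding symmetrized matrix S(αₙ,βₙ,γₙ,δₙ,φₙ,κₙ) are nonzero. -/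

import Mathlib

/-- The 4×4 tridiagonal row-stochastic matrix with parameters α,β,γ,δ,φ,κ. -/
noncomputable def Amat (α β γ δ φ κ : ℝ) : Matrix (Fin 4) (Fin 4) ℝ :=
  !![α, 1-α, 0, 0;
     β, γ, 1-β-γ, 0;
     0, δ, φ, 1-δ-φ;
     0, 0, 1-κ, κ]


/-- The symmetrized tridiagonal matrix S with diagonal (α,γ,φ,κ) and
off-diagonal entries r₁ = √((1−α)β), r₂ = √((1−β−γ)δ), r₃ = √((1−δ−φ)(1−κ)). -/
noncomputable def Smat (α β γ δ φ κ : ℝ) : Matrix (Fin 4) (Fin 4) ℝ :=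
  !![α, Real.sqrt ((1-α)*β), 0, 0;
     Real.sqrt ((1-α)*β), γ, Real.sqrt ((1-β-γ)*δ), 0;
     0, Real.sqrt ((1-β-γ)*δ), φ, Real.sqrt ((1-δ-φ)*(1-κ));
     0, 0, Real.sqrt ((1-δ-φ)*(1-κ)), κ]

/-- Δₖ: the determinant of the leading k×k principal submatrix of a 4×4 matrix,
with Δ₀ = 1 (determinant of the empty matrix). -/
noncomputable def leadingMinor (M : Matrix (Fin 4) (Fin 4) ℝ) (k : ℕ) : ℝ :=
  if h : k ≤ 4 then (M.submatrix (Fin.castLE h) (Fin.castLE h)).det else 0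

/- ------------------ auxiliary lemmas ------------------ -/

lemma lm1 (a b c d p k : ℝ) : leadingMinor (Smat a b c d p k) 1 = a := by
  rw [leadingMinor, dif_pos (by norm_num)]
  rw [show (Smat a b c d p k).submatrix (Fin.castLE (by norm_num : (1:ℕ) ≤ 4)) (Fin.castLE (by norm_num)) = !![a] from by
    ext i j; fin_cases i <;> fin_cases j <;> rfl]
  simp [Matrix.det_fin_one]

lemma lm2 (a b c d p k : ℝ) (h1 : 0 ≤ (1-a)*b) :
    leadingMinor (Smat a b c d p k) 2 = a*c - (1-a)*b := by
  rw [leadingMinor, dif_pos (by norm_num)]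
  rw [show (Smat a b c d p k).submatrix (Fin.castLE (by norm_num : (2:ℕ) ≤ 4)) (Fin.castLE (by norm_num)) =
      !![a, Real.sqrt ((1-a)*b); Real.sqrt ((1-a)*b), c] from by
    ext i j; fin_cases i <;> fin_cases j <;> rfl]
  rw [Matrix.det_fin_two_of, Real.mul_self_sqrt h1]

lemma lm3 (a b c d p k : ℝ) (h1 : 0 ≤ (1-a)*b) (h2 : 0 ≤ (1-b-c)*d) :
    leadingMinor (Smat a b c d p k) 3 = (a*c - (1-a)*b)*p - (1-b-c)*d*a := by
  have e1 : Real.sqrt ((1-a)*b) ^ 2 = (1-a)*b := Real.sq_sqrt h1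
  have e2 : Real.sqrt ((1-b-c)*d) ^ 2 = (1-b-c)*d := Real.sq_sqrt h2
  rw [leadingMinor, dif_pos (by norm_num)]
  rw [show (Smat a b c d p k).submatrix (Fin.castLE (by norm_num : (3:ℕ) ≤ 4)) (Fin.castLE (by norm_num)) =
      !![a, Real.sqrt ((1-a)*b), 0; Real.sqrt ((1-a)*b), c, Real.sqrt ((1-b-c)*d); 0, Real.sqrt ((1-b-c)*d), p] from by
    ext i j; fin_cases i <;> fin_cases j <;> rfl]
  simp [Matrix.det_fin_three]
  set r1 := Real.sqrt ((1-a)*b)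
  set r2 := Real.sqrt ((1-b-c)*d)
  linear_combination (-p) * e1 + (-a) * e2

lemma lm4 (a b c d p k : ℝ) (h1 : 0 ≤ (1-a)*b) (h2 : 0 ≤ (1-b-c)*d) (h3 : 0 ≤ (1-d-p)*(1-k)) :
    leadingMinor (Smat a b c d p k) 4 =
      ((a*c - (1-a)*b)*p - (1-b-c)*d*a)*k - (1-d-p)*(1-k)*(a*c - (1-a)*b) := by
  have e1 : Real.sqrt ((1-a)*b) ^ 2 = (1-a)*b := Real.sq_sqrt h1
  have e2 : Real.sqrt ((1-b-c)*d) ^ 2 = (1-b-c)*d := Real.sq_sqrt h2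
  have e3 : Real.sqrt ((1-d-p)*(1-k)) ^ 2 = (1-d-p)*(1-k) := Real.sq_sqrt h3
  rw [leadingMinor, dif_pos (by norm_num)]
  rw [show (Smat a b c d p k).submatrix (Fin.castLE (by norm_num)) (Fin.castLE (by norm_num)) = Smat a b c d p k from by
    ext i j; simp [Matrix.submatrix_apply, Fin.castLE]]
  rw [Matrix.det_succ_row_zero]
  simp only [Fin.sum_univ_four, Smat, Matrix.det_fin_three, Matrix.cons_val', Matrix.cons_val_zero,
    Matrix.cons_val_one, Matrix.head_cons, Matrix.empty_val', Matrix.cons_val_fin_one,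
    Matrix.head_fin_const, Matrix.cons_val_two, Matrix.tail_cons, Matrix.cons_val_three,
    Matrix.submatrix_apply, Fin.succAbove, Matrix.cons_val_succ, Fin.isValue,
    Matrix.vecHead, Matrix.vecTail]
  norm_num [Fin.lt_def, Matrix.submatrix_apply, Matrix.vecHead, Matrix.vecTail]
  simp (config := {decide := true}) [Matrix.cons_val, Fin.castSucc, Fin.succ]
  set r1 := Real.sqrt ((1-a)*b)
  set r2 := Real.sqrt ((1-b-c)*d)
  set r3 := Real.sqrt ((1-d-p)*(1-k))
  linear_combination (r3^2 - k*p) * e1 + (-(a*k)) * e2 + (-(a*c) + (1-a)*b) * e3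

open Polynomial in
noncomputable def pol1 (α : ℝ) : Polynomial ℝ := X + C α
open Polynomial in
noncomputable def pol2 (α β γ : ℝ) : Polynomial ℝ :=
  pol1 α * (X + C γ) - C β * (C (1-α) - X)
open Polynomial in
noncomputable def pol3 (α β γ δ φ : ℝ) : Polynomial ℝ :=
  pol2 α β γ * (X + C φ) - C δ * ((C (1-β-γ) - X) * pol1 α)
open Polynomial in
noncomputable def pol4 (α β γ δ φ κ : ℝ) : Polynomial ℝ :=
  pol3 α β γ δ φ * (X + C κ) - (C (1-δ-φ) - X) * ((C (1-κ) - X) * pol2 α β γ)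

lemma eval1 (α t : ℝ) : (pol1 α).eval t = t + α := by
  simp [pol1]

lemma eval2 (α β γ t : ℝ) :
    (pol2 α β γ).eval t = (t+α)*(t+γ) - β*((1-α)-t) := by
  simp [pol2, eval1]

lemma eval3 (α β γ δ φ t : ℝ) :
    (pol3 α β γ δ φ).eval t =
      ((t+α)*(t+γ) - β*((1-α)-t))*(t+φ) - δ*(((1-β-γ)-t)*(t+α)) := by
  simp [pol3, eval2, eval1]

lemma eval4 (α β γ δ φ κ t : ℝ) :
    (pol4 α β γ δ φ κ).eval t =
      (((t+α)*(t+γ) - β*((1-α)-t))*(t+φ) - δ*(((1-β-γ)-t)*(t+α)))*(t+κ)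
        - ((1-δ-φ)-t)*(((1-κ)-t)*((t+α)*(t+γ) - β*((1-α)-t))) := by
  simp [pol4, eval3, eval2]

theorem stmt_9 (α β γ δ φ κ : ℝ)
    (hα : 0 ≤ α) (hα1 : α ≤ 1) (hβ : 0 ≤ β) (hβ1 : β ≤ 1)
    (hγ : 0 ≤ γ) (hγ1 : γ ≤ 1) (hδ : 0 ≤ δ) (hδ1 : δ ≤ 1)
    (hφ : 0 ≤ φ) (hφ1 : φ ≤ 1) (hκ : 0 ≤ κ) (hκ1 : κ ≤ 1)
    (hβγ : β + γ ≤ 1) (hδφ : δ + φ ≤ 1)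
    (irr1 : α < 1) (irr2 : 0 < β) (irr3 : β + γ < 1)
    (irr4 : 0 < δ) (irr5 : δ + φ < 1) (irr6 : κ < 1) :
    ∃ a b c d p k : ℕ → ℝ,
      Filter.Tendsto a Filter.atTop (nhds α) ∧
      Filter.Tendsto b Filter.atTop (nhds β) ∧
      Filter.Tendsto c Filter.atTop (nhds γ) ∧
      Filter.Tendsto d Filter.atTop (nhds δ) ∧
      Filter.Tendsto p Filter.atTop (nhds φ) ∧
      Filter.Tendsto k Filter.atTop (nhds κ) ∧
      ∀ n : ℕ,
        (0 ≤ a n ∧ a n ≤ 1) ∧ (0 ≤ b n ∧ b n ≤ 1) ∧ (0 ≤ c n ∧ c n ≤ 1) ∧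
        (0 ≤ d n ∧ d n ≤ 1) ∧ (0 ≤ p n ∧ p n ≤ 1) ∧ (0 ≤ k n ∧ k n ≤ 1) ∧
        b n + c n ≤ 1 ∧ d n + p n ≤ 1 ∧
        (a n < 1 ∧ 0 < b n ∧ b n + c n < 1 ∧ 0 < d n ∧ d n + p n < 1 ∧ k n < 1) ∧
        (∀ j : ℕ, 1 ≤ j → j ≤ 4 →
          leadingMinor (Smat (a n) (b n) (c n) (d n) (p n) (k n)) j ≠ 0) := by
  -- the product polynomial
  set Q : Polynomial ℝ := pol1 α * (pol2 α β γ * (pol3 α β γ δ φ * pol4 α β γ δ φ κ)) with hQdef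
  -- positivity of its value at 10
  have w1 : (0:ℝ) < 10 + α := by linarith
  have w2 : (0:ℝ) < (10+α)*(10+γ) - β*((1-α)-10) := by
    nlinarith [mul_nonneg hα hγ, mul_nonneg hβ hα]
  have w3 : (0:ℝ) < ((10+α)*(10+γ) - β*((1-α)-10))*(10+φ) - δ*(((1-β-γ)-10)*(10+α)) := by
    nlinarith [mul_pos w2 (show (0:ℝ) < 10+φ by linarith),
      mul_nonneg hδ (mul_nonneg (show (0:ℝ) ≤ 9+β+γ by linarith) (show (0:ℝ) ≤ 10+α by linarith))]
  have hbr : (0:ℝ) < (10+φ)*(10+κ) - (9+δ+φ)*(9+κ) := by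
    nlinarith [mul_nonneg hδ (show (0:ℝ) ≤ 1-κ by linarith)]
  have w4 : (0:ℝ) < (((10+α)*(10+γ) - β*((1-α)-10))*(10+φ) - δ*(((1-β-γ)-10)*(10+α)))*(10+κ)
        - ((1-δ-φ)-10)*(((1-κ)-10)*((10+α)*(10+γ) - β*((1-α)-10))) := by
    nlinarith [mul_pos w2 hbr,
      mul_nonneg hδ (mul_nonneg (show (0:ℝ) ≤ 9+β+γ by linarith)
        (mul_nonneg (show (0:ℝ) ≤ 10+α by linarith) (show (0:ℝ) ≤ 10+κ by linarith)))]
  have wq : 0 < Q.eval 10 := by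
    rw [hQdef, Polynomial.eval_mul, Polynomial.eval_mul, Polynomial.eval_mul,
      eval1, eval2, eval3, eval4]
    exact mul_pos w1 (mul_pos w2 (mul_pos w3 w4))
  have hQ0 : Q ≠ 0 := by
    intro h
    rw [h, Polynomial.eval_zero] at wq
    exact lt_irrefl 0 wq
  have hfin : {x : ℝ | Q.IsRoot x}.Finite := Polynomial.finite_setOf_isRoot hQ0
  -- choose the perturbations
  have key : ∀ n : ℕ, ∃ t : ℝ, 0 < t ∧ t < 1/((n:ℝ)+1) ∧ t < 1-α ∧ t < 1-β-γ ∧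
      t < 1-δ-φ ∧ t < 1-κ ∧ ¬ Q.IsRoot t := by
    intro n
    have hs : (0:ℝ) < min (1/((n:ℝ)+1)) (min (1-α) (min (1-β-γ) (min (1-δ-φ) (1-κ)))) := by
      have h0 : (0:ℝ) < 1/((n:ℝ)+1) := by positivity
      simp only [lt_min_iff]
      exact ⟨h0, by linarith, by linarith, by linarith, by linarith⟩
    have hne : (Set.Ioo (0:ℝ) (min (1/((n:ℝ)+1)) (min (1-α) (min (1-β-γ) (min (1-δ-φ) (1-κ))))) \
        {x : ℝ | Q.IsRoot x}).Nonempty := ((Set.Ioo_infinite hs).diff hfin).nonempty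
    obtain ⟨t, ⟨ht0, hts⟩, htr⟩ := hne
    simp only [lt_min_iff] at hts
    exact ⟨t, ht0, hts.1, hts.2.1, hts.2.2.1, hts.2.2.2.1, hts.2.2.2.2, htr⟩
  choose t ht0 ht1 htα htβγ htδφ htκ htroot using key
  have httend : Filter.Tendsto t Filter.atTop (nhds 0) :=
    squeeze_zero (fun n => le_of_lt (ht0 n)) (fun n => le_of_lt (ht1 n))
      tendsto_one_div_add_atTop_nhds_zero_nat
  refine ⟨fun n => α + t n, fun _ => β, fun n => γ + t n, fun _ => δ, fun n => φ + t n,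
    fun n => κ + t n, ?_, tendsto_const_nhds, ?_, tendsto_const_nhds, ?_, ?_, ?_⟩
  · simpa using (tendsto_const_nhds (x := α)).add httend
  · simpa using (tendsto_const_nhds (x := γ)).add httend
  · simpa using (tendsto_const_nhds (x := φ)).add httend
  · simpa using (tendsto_const_nhds (x := κ)).add httend
  intro n
  beta_reduce
  have t0 := ht0 n
  have tα := htα n
  have tβγ := htβγ n
  have tδφ := htδφ n
  have tκ := htκ n
  -- nonnegativity of the sqrt arguments
  have h1 : 0 ≤ (1 - (α + t n)) * β := mul_nonneg (by linarith) hβ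
  have h2 : 0 ≤ (1 - β - (γ + t n)) * δ := mul_nonneg (by linarith) hδ
  have h3 : 0 ≤ (1 - δ - (φ + t n)) * (1 - (κ + t n)) :=
    mul_nonneg (by linarith) (by linarith)
  -- the four evaluations are nonzero
  have hroot : Q.eval (t n) ≠ 0 := htroot n
  rw [hQdef, Polynomial.eval_mul, Polynomial.eval_mul, Polynomial.eval_mul] at hroot
  obtain ⟨hp1, hp2, hp3, hp4⟩ :
      (pol1 α).eval (t n) ≠ 0 ∧ (pol2 α β γ).eval (t n) ≠ 0 ∧
      (pol3 α β γ δ φ).eval (t n) ≠ 0 ∧ (pol4 α β γ δ φ κ).eval (t n) ≠ 0 := by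
    rcases mul_ne_zero_iff.mp hroot with ⟨a1, rest⟩
    rcases mul_ne_zero_iff.mp rest with ⟨a2, rest2⟩
    rcases mul_ne_zero_iff.mp rest2 with ⟨a3, a4⟩
    exact ⟨a1, a2, a3, a4⟩
  rw [eval1] at hp1
  rw [eval2] at hp2
  rw [eval3] at hp3
  rw [eval4] at hp4
  refine ⟨⟨by linarith, by linarith⟩, ⟨hβ, hβ1⟩, ⟨by linarith, by linarith⟩,
    ⟨hδ, hδ1⟩, ⟨by linarith, by linarith⟩, ⟨by linarith, by linarith⟩,
    by linarith, by linarith,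
    ⟨by linarith, irr2, by linarith, irr4, by linarith, by linarith⟩, ?_⟩
  intro j hj1 hj4
  interval_cases j
  · rw [lm1]
    intro h; exact hp1 (by linarith)
  · rw [lm2 _ _ _ _ _ _ h1]
    intro h; exact hp2 (by linear_combination h)
  · rw [lm3 _ _ _ _ _ _ h1 h2]
    intro h; exact hp3 (by linear_combination h)
  · rw [lm4 _ _ _ _ _ _ h1 h2 h3]
    intro h; exact hp4 (by linear_combination h)
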